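/- Let A be a block linear map on ℂ × ℂⁿ with a ≠ 0. Then for every ξ = (ξ_⊥, ξ_∥) ∈ ℂ × ℂⁿ, the hat transform satisfies Â((Aξ)_⊥, ξ_∥) = (ξ_⊥, (Aξ)_∥), where (Aξ)_⊥ = a ξ_⊥ + b·ξ_∥ and (Aξ)_∥ = ξ_⊥ c + d ξ_∥. Moreover, the map ξ ↦ ((Aξ)_⊥, ξ_∥) is a linear bijection of ℂ^{1+n}. -/

import Mathlib

open Matrix

/-- The block linear map `A(ξ_⊥, ξ_∥) = (a ξ_⊥ + b·ξ_∥, ξ_⊥ c + d ξ_∥)`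
on `ℂ × ℂⁿ`. -/
noncomputable def blockMap {n : ℕ} (a : ℂ) (b c : Fin n → ℂ)
    (d : Matrix (Fin n) (Fin n) ℂ) (ξ : ℂ × (Fin n → ℂ)) : ℂ × (Fin n → ℂ) :=
  (a * ξ.1 + b ⬝ᵥ ξ.2, ξ.1 • c + d *ᵥ ξ.2)

/-- The hat transform
`Â(η_⊥, η_∥) = (a⁻¹η_⊥ - a⁻¹ b·η_∥, a⁻¹η_⊥ c + d η_∥ - a⁻¹(b·η_∥) c)`. -/
noncomputable def hatMap {n : ℕ} (a : ℂ) (b c : Fin n → ℂ)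
    (d : Matrix (Fin n) (Fin n) ℂ) (η : ℂ × (Fin n → ℂ)) : ℂ × (Fin n → ℂ) :=
  (a⁻¹ * η.1 - a⁻¹ * (b ⬝ᵥ η.2),
    (a⁻¹ * η.1) • c + d *ᵥ η.2 - (a⁻¹ * (b ⬝ᵥ η.2)) • c)

/- STATEMENT 6: for `a ≠ 0` and every `ξ = (ξ_⊥, ξ_∥)`, the hat transform
satisfies `Â((Aξ)_⊥, ξ_∥) = (ξ_⊥, (Aξ)_∥)`; moreover `ξ ↦ ((Aξ)_⊥, ξ_∥)`
is a (linear) bijection of `ℂ^{1+n}`. -/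
theorem stmt6 {n : ℕ} (hn : 1 ≤ n) (a : ℂ) (b c : Fin n → ℂ)
    (d : Matrix (Fin n) (Fin n) ℂ) (ha : a ≠ 0) :
    (∀ ξ : ℂ × (Fin n → ℂ),
      hatMap a b c d ((blockMap a b c d ξ).1, ξ.2) = (ξ.1, (blockMap a b c d ξ).2)) ∧
    Function.Bijective (fun ξ : ℂ × (Fin n → ℂ) => ((blockMap a b c d ξ).1, ξ.2)) := by
  constructor
  · intro ξ
    simp only [hatMap, blockMap]
    refine Prod.ext ?_ ?_
    · field_simp; ring
    · have h1 : a⁻¹ * (a * ξ.1 + b ⬝ᵥ ξ.2) - a⁻¹ * (b ⬝ᵥ ξ.2) = ξ.1 := by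
        field_simp; ring
      have h2 : (a⁻¹ * (a * ξ.1 + b ⬝ᵥ ξ.2)) • c - (a⁻¹ * (b ⬝ᵥ ξ.2)) • c = ξ.1 • c := by
        rw [← sub_smul, h1]
      show (a⁻¹ * (a * ξ.1 + b ⬝ᵥ ξ.2)) • c + d *ᵥ ξ.2 - (a⁻¹ * (b ⬝ᵥ ξ.2)) • c = ξ.1 • c + d *ᵥ ξ.2
      linear_combination (norm := module) h2
  · constructor
    · intro x y h
      simp only [blockMap, Prod.mk.injEq] at h
      obtain ⟨h1, h2⟩ := h
      rw [h2] at h1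
      have : x.1 = y.1 := mul_left_cancel₀ ha (by linear_combination h1)
      exact Prod.ext this h2
    · intro η
      refine ⟨(a⁻¹ * (η.1 - b ⬝ᵥ η.2), η.2), Prod.ext ?_ rfl⟩
      show a * (a⁻¹ * (η.1 - b ⬝ᵥ η.2)) + b ⬝ᵥ η.2 = η.1
      field_simp; ring
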